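/- arXiv:2506.07846 — 2 statements merged into one kernel-verified Lean document; each statement's English description precedes it below -/
import Mathlib

section
/- Let C be an [n,k,d] Griesmer code over F_q, i.e., n = Σ_{i=0}^{k-1} ⌈d/q^i⌉. Then the maximum point multiplicity of the multiset of columns of a generator matrix of C (viewed in PG(k−1,q)) equals exactly ⌈d/q^{k−1}⌉. -/
/-- Hamming weight of a vector. -/
noncomputable def wt {ι F : Type*} [Zero F] (c : ι → F) : ℕ :=
  Nat.card {i // c i ≠ 0}

/-- Griesmer sum `g_q(k,d) = ∑_{i<k} ⌈d / q^i⌉` (using `(d + q^i - 1)/q^i`). -/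
def gbound (q k d : ℕ) : ℕ :=
  ∑ i ∈ Finset.range k, (d + q ^ i - 1) / q ^ i

open Finset Module
universe v w

set_option linter.unusedSectionVars false
set_option linter.unusedVariables false



lemma gbound_zero (q d : ℕ) : gbound q 0 d = 0 := by simp [gbound]

lemma cd_succ {d b : ℕ} (hd : 1 ≤ d) (hb : 1 ≤ b) :
    (d + b - 1) / b = (d - 1) / b + 1 := by
  have h : d + b - 1 = (d - 1) + b := by omega
  rw [h, Nat.add_div_right _ hb]

lemma cd_pos {d b : ℕ} (hd : 0 < d) (hb : 0 < b) : 0 < (d + b - 1) / b := by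
  rw [cd_succ hd hb]; exact Nat.succ_pos _

lemma cd_comp {d q : ℕ} (hd : 1 ≤ d) (hq : 1 ≤ q) (i : ℕ) :
    (d + q ^ (i + 1) - 1) / q ^ (i + 1) =
      ((d + q - 1) / q + q ^ i - 1) / q ^ i := by
  have hqi : 1 ≤ q ^ i := Nat.one_le_pow _ _ hq
  have hqi1 : 1 ≤ q ^ (i + 1) := Nat.one_le_pow _ _ hq
  have h1 : 1 ≤ (d + q - 1) / q := cd_pos hd hq
  rw [cd_succ hd hqi1, cd_succ h1 hqi, cd_succ hd hq]
  rw [Nat.add_sub_cancel, Nat.div_div_eq_div_mul, pow_succ, mul_comm (q^i) q]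

lemma cd_mono {d d' b : ℕ} (h : d ≤ d') : (d + b - 1) / b ≤ (d' + b - 1) / b :=
  Nat.div_le_div_right (by omega)

lemma cd_le_of_le {d b r : ℕ} (hb : 0 < b) (h : d ≤ b * r) :
    (d + b - 1) / b ≤ r := by
  rw [Nat.div_le_iff_le_mul_add_pred hb]; omega

lemma gbound_succ_right (q k d : ℕ) :
    gbound q (k + 1) d = gbound q k d + (d + q ^ k - 1) / q ^ k := by
  simp [gbound, Finset.sum_range_succ]

lemma gbound_succ_left {q d : ℕ} (k : ℕ) (hd : 1 ≤ d) (hq : 1 ≤ q) :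
    gbound q (k + 1) d = d + gbound q k ((d + q - 1) / q) := by
  rw [gbound, Finset.sum_range_succ']
  have h0 : (d + q ^ 0 - 1) / q ^ 0 = d := by simp
  rw [h0, add_comm]
  congr 1
  exact Finset.sum_congr rfl fun i _ => cd_comp hd hq i

lemma gbound_mono {q k d d' : ℕ} (h : d ≤ d') : gbound q k d ≤ gbound q k d' :=
  Finset.sum_le_sum fun i _ => cd_mono h

lemma gbound_strict_mono {q k d d' : ℕ} (hk : 1 ≤ k) (h : d < d') :
    gbound q k d < gbound q k d' := by
  cases k with
  | zero => omega
  | succ k =>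
    rw [gbound, gbound, Finset.sum_range_succ', Finset.sum_range_succ']
    have h0 : ∀ e : ℕ, (e + q ^ 0 - 1) / q ^ 0 = e := by intro e; simp
    rw [h0, h0]
    have : (∑ i ∈ Finset.range k, (d + q^(i+1)-1)/q^(i+1)) ≤
        ∑ i ∈ Finset.range k, (d'+q^(i+1)-1)/q^(i+1) :=
      Finset.sum_le_sum fun i _ => cd_mono h.le
    omega


section
variable {F : Type*} [Field F] [Fintype F]
variable {V : Type*} [AddCommGroup V] [Module F V]

/-- weight of the codeword corresponding to functional `f`. -/
noncomputable def mw {ι : Type*} (c : ι → V) (f : Module.Dual F V) : ℕ :=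
  Nat.card {j // f (c j) ≠ 0}

/-- multiplicity of the point `v`. -/
noncomputable def multc (F : Type*) {V ι : Type*} [Zero F] [SMul F V]
    (c : ι → V) (v : V) : ℕ :=
  Nat.card {j // ∃ lam : F, lam ≠ 0 ∧ c j = lam • v}

omit [Fintype F] in
lemma mw_eq_card {ι : Type*} [Fintype ι] (c : ι → V) (f : Module.Dual F V)
    [DecidablePred fun j => f (c j) ≠ 0] :
    mw c f = (univ.filter fun j => f (c j) ≠ 0).card := by
  rw [mw, Nat.card_eq_fintype_card, Fintype.card_subtype]

omit [Fintype F] in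
lemma exists_dual_ne_zero [FiniteDimensional F V] (h : Nontrivial V) :
    ∃ f : Module.Dual F V, f ≠ 0 := by
  have hpos : 0 < finrank F V := finrank_pos
  let b := Module.finBasis F V
  refine ⟨b.coord ⟨0, hpos⟩, fun hf => ?_⟩
  have : b.coord ⟨0, hpos⟩ (b ⟨0, hpos⟩) = 1 := by simp
  rw [hf] at this
  simp at this

omit [Fintype F] in
lemma exists_dual_annihilator [FiniteDimensional F V] {p : Submodule F V}
    (h : p ≠ ⊤) : ∃ f : Module.Dual F V, f ≠ 0 ∧ ∀ x ∈ p, f x = 0 := by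
  have hnt : Nontrivial (V ⧸ p) := Submodule.Quotient.nontrivial_iff.mpr h
  obtain ⟨g, hg⟩ := exists_dual_ne_zero (F := F) (V := V ⧸ p) hnt
  refine ⟨g.comp p.mkQ, fun hf => hg ?_, fun x hx => ?_⟩
  · ext y
    exact DFunLike.congr_fun hf y
  · simp [Submodule.Quotient.mk_eq_zero p |>.mpr hx]

omit [Fintype F] in
/-- vanishing on a spanning family means zero -/
lemma dual_eq_zero_of_vanish {ι : Type*} {c : ι → V}
    (hsp : Submodule.span F (Set.range c) = ⊤) {f : Module.Dual F V}
    (hf : ∀ j, f (c j) = 0) : f = 0 := by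
  apply LinearMap.ext_on hsp
  rintro x ⟨j, rfl⟩
  simpa using hf j

omit [Fintype F] in
/-- if `mw c f = 0` then `f` vanishes on all columns -/
lemma vanish_of_mw_zero {ι : Type*} [Finite ι] {c : ι → V} {f : Module.Dual F V}
    (h : mw c f = 0) : ∀ j, f (c j) = 0 := by
  rw [mw, Nat.card_eq_zero] at h
  intro j
  by_contra hj
  rcases h with h | h
  · exact h.elim' ⟨j, hj⟩
  · exact not_finite {j // f (c j) ≠ 0}

/-- key double counting -/
lemma key_count {ι : Type*} [Fintype ι] (c : ι → V) (f g : Module.Dual F V) :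
    ∑ l : F, mw c (g - l • f) =
      Fintype.card F * Nat.card {j // f (c j) = 0 ∧ g (c j) ≠ 0} +
        (Fintype.card F - 1) * mw c f := by
  classical
  have hcard : ∀ l : F, mw c (g - l • f) =
      ∑ j : ι, (if g (c j) - l * f (c j) ≠ 0 then 1 else 0) := by
    intro l
    rw [mw_eq_card, Finset.card_filter]
    apply Finset.sum_congr rfl
    intro j _
    simp [LinearMap.sub_apply, LinearMap.smul_apply, smul_eq_mul]
  simp only [hcard]
  rw [Finset.sum_comm]
  have hinner : ∀ j : ι, (∑ l : F, if g (c j) - l * f (c j) ≠ 0 then 1 else 0 : ℕ) =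
      if f (c j) = 0 then (if g (c j) ≠ 0 then Fintype.card F else 0)
      else Fintype.card F - 1 := by
    intro j
    by_cases hf : f (c j) = 0
    · simp only [hf, mul_zero, sub_zero, if_pos hf]
      by_cases hg : g (c j) ≠ 0
      · simp [hg]
      · simp [hg]
    · rw [if_neg hf, ← Finset.card_filter]
      have hset : (univ.filter fun l : F => g (c j) - l * f (c j) ≠ 0) =
          univ \ {g (c j) * (f (c j))⁻¹} := by
        ext l
        simp only [Finset.mem_filter, Finset.mem_univ, true_and, Finset.mem_sdiff,
          Finset.mem_singleton]
        constructor
        · intro h hl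
          apply h
          rw [hl]
          field_simp
          simp
        · intro h h2
          apply h
          field_simp
          linear_combination -h2
      rw [hset, Finset.card_sdiff_of_subset (by simp), Finset.card_singleton, Finset.card_univ]
  simp only [hinner]
  rw [← Finset.sum_filter_add_sum_filter_not univ (fun j => f (c j) = 0)]
  have h1 : ∑ j ∈ univ.filter (fun j => f (c j) = 0),
      (if f (c j) = 0 then (if g (c j) ≠ 0 then Fintype.card F else 0)
        else Fintype.card F - 1) =
      Fintype.card F * Nat.card {j // f (c j) = 0 ∧ g (c j) ≠ 0} := by
    rw [Nat.card_eq_fintype_card, Fintype.card_subtype, ← Finset.filter_filter,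
      Finset.card_filter, Finset.mul_sum]
    apply Finset.sum_congr rfl
    intro j hj
    rw [Finset.mem_filter] at hj
    rw [if_pos hj.2]
    split <;> simp
  have h2 : ∑ j ∈ univ.filter (fun j => ¬ f (c j) = 0),
      (if f (c j) = 0 then (if g (c j) ≠ 0 then Fintype.card F else 0)
        else Fintype.card F - 1) = (Fintype.card F - 1) * mw c f := by
    rw [mw_eq_card]
    rw [Finset.sum_congr rfl (fun j hj => if_neg (Finset.mem_filter.mp hj).2)]
    rw [Finset.sum_const, smul_eq_mul, mul_comm]
  rw [h1, h2]

lemma key_ineq {ι : Type*} [Fintype ι] (c : ι → V) {f g : Module.Dual F V} {d : ℕ}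
    (hmin : ∀ h : Module.Dual F V, h ≠ 0 → d ≤ mw c h)
    (hf : mw c f = d)
    (hg : ∀ l : F, g - l • f ≠ 0) :
    d ≤ Fintype.card F * Nat.card {j // f (c j) = 0 ∧ g (c j) ≠ 0} := by
  set q := Fintype.card F with hqdef
  have hq : 1 ≤ q := Fintype.card_pos
  have e1 : q * d ≤ ∑ l : F, mw c (g - l • f) := by
    calc q * d = ∑ _l : F, d := by rw [Finset.sum_const, Finset.card_univ, smul_eq_mul]
    _ ≤ _ := Finset.sum_le_sum fun l _ => hmin _ (hg l)
  rw [key_count c f g, hf] at e1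
  have hqd : q * d = (q - 1) * d + d := by
    conv_lhs => rw [← Nat.succ_pred_eq_of_pos hq]
    rw [Nat.succ_eq_add_one, add_mul, one_mul, Nat.pred_eq_sub_one]
  rw [hqd] at e1
  have := Nat.le_of_add_le_add_right (a := d)
    (by rw [add_comm] at e1 ⊢; linarith : d + (q-1) * d ≤ q * Nat.card {j // f (c j) = 0 ∧ g (c j) ≠ 0} + (q-1)*d)
  exact this

end

section main
variable {F : Type*} [Field F] [Fintype F]

/-- dimension of kernel of a nonzero functional -/
lemma finrank_ker_dual {V : Type*} [AddCommGroup V] [Module F V] [FiniteDimensional F V]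
    {f : Module.Dual F V} (hf : f ≠ 0) :
    finrank F (LinearMap.ker f) + 1 = finrank F V := by
  obtain ⟨x, hx⟩ : ∃ x, f x ≠ 0 := by
    by_contra h
    push_neg at h
    exact hf (LinearMap.ext fun x => by simp [h x])
  have hsurj : Function.Surjective f := fun y =>
    ⟨(y * (f x)⁻¹) • x, by rw [map_smul, smul_eq_mul, inv_mul_cancel_right₀ hx]⟩
  have hr : LinearMap.range f = ⊤ := LinearMap.range_eq_top.mpr hsurj
  have := LinearMap.finrank_range_add_finrank_ker f
  rw [hr] at this
  rw [finrank_top, finrank_self] at this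
  omega

/-- residual bound: for minimal weight f₀ and any nonzero functional on its kernel -/
lemma residual_bound {V : Type*} [AddCommGroup V] [Module F V] [FiniteDimensional F V]
    {ι : Type*} [Fintype ι] (c : ι → V) {f₀ : Module.Dual F V} {d₀ : ℕ}
    (hmin : ∀ h : Module.Dual F V, h ≠ 0 → d₀ ≤ mw c h)
    (hf₀ : mw c f₀ = d₀)
    [DecidablePred fun j => f₀ (c j) = 0]
    (g' : Module.Dual F (LinearMap.ker f₀)) (hg' : g' ≠ 0) :
    d₀ ≤ Fintype.card F *
      mw (fun j : {j // f₀ (c j) = 0} => (⟨c j.1, LinearMap.mem_ker.mpr j.2⟩ :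
        LinearMap.ker f₀)) g' := by
  obtain ⟨g, hg⟩ := LinearMap.exists_extend g'
  have hpt : ∀ j' : {j // f₀ (c j) = 0},
      g (c j'.1) = g' ⟨c j'.1, LinearMap.mem_ker.mpr j'.2⟩ := by
    intro j'
    exact DFunLike.congr_fun hg (⟨c j'.1, LinearMap.mem_ker.mpr j'.2⟩ : LinearMap.ker f₀)
  have hfw : f₀.comp (LinearMap.ker f₀).subtype = 0 := by
    ext x; exact x.2
  have hgl : ∀ l : F, g - l • f₀ ≠ 0 := by
    intro l heq
    apply hg'
    have h2 : g' = (g - l • f₀).comp (LinearMap.ker f₀).subtype := by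
      rw [LinearMap.sub_comp, LinearMap.smul_comp, hg, hfw, smul_zero, sub_zero]
    rw [h2, heq, LinearMap.zero_comp]
  have hkey := key_ineq c hmin hf₀ hgl
  have hcardeq : Nat.card {j // f₀ (c j) = 0 ∧ g (c j) ≠ 0} =
      mw (fun j : {j // f₀ (c j) = 0} =>
        (⟨c j.1, LinearMap.mem_ker.mpr j.2⟩ : LinearMap.ker f₀)) g' := by
    rw [mw]
    apply Nat.card_congr
    exact ((Equiv.subtypeSubtypeEquivSubtypeInter (fun j => f₀ (c j) = 0)
      (fun j => g (c j) ≠ 0)).symm.trans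
      (Equiv.subtypeEquivRight (fun j' => by rw [hpt j'])))
  rw [hcardeq] at hkey
  exact hkey
end main

section main2
variable {F : Type*} [Field F] [Fintype F]

lemma mw_le_card {V : Type*} [AddCommGroup V] [Module F V] {ι : Type*} [Fintype ι]
    (c : ι → V) (f : Module.Dual F V) : mw c f ≤ Fintype.card ι := by
  classical
  rw [mw_eq_card]
  exact (Finset.card_filter_le _ _).trans_eq (Finset.card_univ)

lemma lemA (k : ℕ) : ∀ (V : Type v) [AddCommGroup V] [Module F V] [FiniteDimensional F V],
    finrank F V = k → ∀ (ι : Type w) [Fintype ι] (c : ι → V),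
    Submodule.span F (Set.range c) = ⊤ → ∀ d : ℕ, 0 < d →
    (∀ f : Module.Dual F V, f ≠ 0 → d ≤ mw c f) →
    gbound (Fintype.card F) k d ≤ Fintype.card ι := by
  induction k with
  | zero =>
    intro V _ _ _ hV ι _ c hsp d hd hmin
    rw [gbound_zero]
    exact Nat.zero_le _
  | succ k ih =>
    intro V _ _ _ hV ι _ c hsp d hd hmin
    classical
    set q := Fintype.card F with hqdef
    have hq : 1 ≤ q := Fintype.card_pos
    have hnt : Nontrivial V := by
      apply Module.nontrivial_of_finrank_pos (R := F)
      omega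
    -- minimal weight functional
    have hSne : {m | ∃ f : Module.Dual F V, f ≠ 0 ∧ mw c f = m}.Nonempty := by
      obtain ⟨f, hf⟩ := exists_dual_ne_zero (F := F) hnt
      exact ⟨mw c f, f, hf, rfl⟩
    set d₀ := sInf {m | ∃ f : Module.Dual F V, f ≠ 0 ∧ mw c f = m} with hd₀def
    obtain ⟨f₀, hf₀ne, hf₀⟩ := Nat.sInf_mem hSne
    have hmin₀ : ∀ h : Module.Dual F V, h ≠ 0 → d₀ ≤ mw c h := fun h hh =>
      Nat.sInf_le ⟨h, hh, rfl⟩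
    have hdd₀ : d ≤ d₀ := le_trans (hmin f₀ hf₀ne) (le_of_eq hf₀)
    have hd₀pos : 0 < d₀ := lt_of_lt_of_le hd hdd₀
    -- residual code
    have hWrank : finrank F (LinearMap.ker f₀) = k := by
      have := finrank_ker_dual (F := F) hf₀ne
      omega
    let ι' := {j // f₀ (c j) = 0}
    let c' : ι' → LinearMap.ker f₀ := fun j => ⟨c j.1, LinearMap.mem_ker.mpr j.2⟩
    have hmin' : ∀ g' : Module.Dual F (LinearMap.ker f₀), g' ≠ 0 →
        (d₀ + q - 1) / q ≤ mw c' g' := by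
      intro g' hg'
      exact cd_le_of_le hq (residual_bound c hmin₀ hf₀ g' hg')
    have hsp' : Submodule.span F (Set.range c') = ⊤ := by
      by_contra hne
      obtain ⟨g', hg'ne, hvan⟩ := exists_dual_annihilator (F := F) hne
      have hmw0 : mw c' g' = 0 := by
        have : IsEmpty {j' // g' (c' j') ≠ 0} :=
          ⟨fun x => x.2 (hvan _ (Submodule.subset_span ⟨x.1, rfl⟩))⟩
        rw [mw]
        exact Nat.card_of_isEmpty
      have := hmin' g' hg'ne
      rw [hmw0] at this
      exact absurd this (Nat.not_le.mpr (cd_pos hd₀pos hq))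
    have hIH := ih (LinearMap.ker f₀) hWrank ι' c' hsp' ((d₀ + q - 1) / q)
      (cd_pos hd₀pos hq) hmin'
    -- cardinalities
    have hsplit : Fintype.card ι' + mw c f₀ = Fintype.card ι := by
      rw [Fintype.card_subtype, mw_eq_card, ← Finset.card_univ]
      exact Finset.card_filter_add_card_filter_not _
    calc gbound q (k+1) d ≤ gbound q (k+1) d₀ := gbound_mono hdd₀
      _ = d₀ + gbound q k ((d₀ + q - 1)/q) := gbound_succ_left k hd₀pos hq
      _ ≤ d₀ + Fintype.card ι' := by omega
      _ ≤ Fintype.card ι := by rw [← hsplit, hf₀]; omega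
end main2

section main
variable {F : Type*} [Field F] [Fintype F]

lemma lemB1 {V : Type v} [AddCommGroup V] [Module F V] [FiniteDimensional F V]
    {ι : Type w} [Fintype ι] (c : ι → V) (hc : ∀ j, c j ≠ 0)
    (hsp : Submodule.span F (Set.range c) = ⊤) (d : ℕ) (hd : 0 < d)
    (hn : Fintype.card ι = gbound (Fintype.card F) (finrank F V) d)
    (hmin : ∀ f : Module.Dual F V, f ≠ 0 → d ≤ mw c f)
    (v : V) (hv : v ≠ 0) :
    multc F c v ≤ (d + Fintype.card F ^ (finrank F V - 1) - 1) /
      Fintype.card F ^ (finrank F V - 1) := by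
  classical
  have hnt : Nontrivial V := nontrivial_of_ne v 0 hv
  have hk1 : 1 ≤ finrank F V := finrank_pos
  set p := Submodule.span F {v} with hpdef
  have hQrank : finrank F (V ⧸ p) + 1 = finrank F V := by
    have h1 := Submodule.finrank_quotient_add_finrank p
    rw [finrank_span_singleton hv] at h1
    exact h1
  let ι'' := {j // c j ∉ p}
  let c'' : ι'' → V ⧸ p := fun j => p.mkQ (c j.1)
  -- spanning
  have hsp'' : Submodule.span F (Set.range c'') = ⊤ := by
    have h1 : Submodule.span F (p.mkQ '' Set.range c) = ⊤ := by
      rw [Submodule.span_image, hsp, Submodule.map_top, Submodule.range_mkQ]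
    rw [← top_le_iff, ← h1]
    apply Submodule.span_le.mpr
    rintro x ⟨y, ⟨j, rfl⟩, rfl⟩
    by_cases hj : c j ∈ p
    · have : p.mkQ (c j) = 0 := (Submodule.Quotient.mk_eq_zero p).mpr hj
      rw [this]
      exact Submodule.zero_mem _
    · exact Submodule.subset_span ⟨⟨j, hj⟩, rfl⟩
  -- minimum distance of projected code
  have hmin'' : ∀ g : Module.Dual F (V ⧸ p), g ≠ 0 → d ≤ mw c'' g := by
    intro g hg
    have hgq : g.comp p.mkQ ≠ 0 := by
      intro h
      apply hg
      ext y
      exact DFunLike.congr_fun h y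
    have heq : mw c'' g = mw c (g.comp p.mkQ) := by
      rw [mw, mw]
      apply Nat.card_congr
      refine ((Equiv.subtypeSubtypeEquivSubtypeInter (fun j => c j ∉ p)
        (fun j => g.comp p.mkQ (c j) ≠ 0)).trans
        (Equiv.subtypeEquivRight fun j => ?_))
      constructor
      · exact fun h => h.2
      · intro h
        refine ⟨fun hj => h ?_, h⟩
        have : p.mkQ (c j) = 0 := (Submodule.Quotient.mk_eq_zero p).mpr hj
        simp [LinearMap.comp_apply, this]
    rw [heq]
    exact hmin _ hgq
  have hA := lemA (finrank F (V ⧸ p)) (V ⧸ p) rfl ι'' c'' hsp'' d hd hmin''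
  -- counting
  have hcount : Fintype.card ι'' + multc F c v = Fintype.card ι := by
    have hmc : multc F c v = Fintype.card {j // c j ∈ p} := by
      rw [multc, Nat.card_eq_fintype_card]
      apply Fintype.card_congr
      apply Equiv.subtypeEquivRight
      intro j
      constructor
      · rintro ⟨lam, hlam, hj⟩
        rw [hj]
        exact Submodule.smul_mem _ _ (Submodule.mem_span_singleton_self v)
      · intro hj
        obtain ⟨a, ha⟩ := (Submodule.mem_span_singleton).mp hj
        refine ⟨a, fun h0 => hc j ?_, ha.symm⟩
        rw [← ha, h0, zero_smul]
    rw [hmc, Fintype.card_subtype, Fintype.card_subtype, ← Finset.card_univ,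
      add_comm]
    exact Finset.card_filter_add_card_filter_not _
  -- combine
  have hVk : finrank F V = (finrank F V - 1) + 1 := by omega
  have hQk : finrank F (V ⧸ p) = finrank F V - 1 := by omega
  rw [hQk] at hA
  rw [hVk, gbound_succ_right] at hn
  omega

end main

section main2
variable {F : Type*} [Field F] [Fintype F]

lemma lemB2 (k : ℕ) :
    ∀ (V : Type v) [AddCommGroup V] [Module F V] [FiniteDimensional F V],
    finrank F V = k → ∀ (ι : Type w) [Fintype ι] (c : ι → V), (∀ j, c j ≠ 0) →
    Submodule.span F (Set.range c) = ⊤ → ∀ d : ℕ,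
    Fintype.card ι = gbound (Fintype.card F) k d →
    (∀ f : Module.Dual F V, f ≠ 0 → d ≤ mw c f) →
    (∃ f : Module.Dual F V, f ≠ 0 ∧ mw c f = d) →
    ∃ v : V, v ≠ 0 ∧ multc F c v =
      (d + Fintype.card F ^ (k - 1) - 1) / Fintype.card F ^ (k - 1) := by
  induction k with
  | zero =>
    intro V _ _ _ hV ι _ c hc hsp d hn hmin hex
    obtain ⟨f, hfne, hf⟩ := hex
    have : Subsingleton V := finrank_zero_iff.mp hV
    exact absurd (LinearMap.ext fun x => by rw [Subsingleton.elim x (0 : V)]; simp) hfne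
  | succ k ih =>
    intro V _ _ _ hV ι _ c hc hsp d hn hmin hex
    classical
    have hq : 1 ≤ Fintype.card F := Fintype.card_pos
    obtain ⟨f₀, hf₀ne, hf₀⟩ := hex
    have hd : 0 < d := by
      rcases Nat.eq_zero_or_pos d with h0 | h
      · exact absurd (dual_eq_zero_of_vanish hsp (vanish_of_mw_zero (h0 ▸ hf₀))) hf₀ne
      · exact h
    rcases Nat.eq_zero_or_pos k with hk0 | hkpos
    · -- base case : finrank V = 1
      subst hk0
      have hnt : Nontrivial V := by
        apply Module.nontrivial_of_finrank_pos (R := F)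
        omega
      obtain ⟨v, hv⟩ := exists_ne (0 : V)
      have hstop : Submodule.span F {v} = ⊤ := by
        apply Submodule.eq_top_of_finrank_eq
        rw [finrank_span_singleton hv, hV]
      refine ⟨v, hv, ?_⟩
      have hall : ∀ j, ∃ lam : F, lam ≠ 0 ∧ c j = lam • v := by
        intro j
        have : c j ∈ Submodule.span F {v} := by rw [hstop]; exact Submodule.mem_top
        obtain ⟨a, ha⟩ := (Submodule.mem_span_singleton).mp this
        exact ⟨a, fun h0 => hc j (by rw [← ha, h0, zero_smul]), ha.symm⟩
      have h1 : multc F c v = Fintype.card ι := by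
        rw [multc, Nat.card_eq_fintype_card]
        exact Fintype.card_congr (Equiv.subtypeUnivEquiv hall)
      have h2 : gbound (Fintype.card F) 1 d = d := by
        simp [gbound]
      rw [h1, hn, h2]
      simp
    · -- main case : k ≥ 1
      -- the minimum weight functional f₀
      -- residual code
      have hWrank : finrank F (LinearMap.ker f₀) = k := by
        have := finrank_ker_dual (F := F) hf₀ne
        omega
      let ι' := {j // f₀ (c j) = 0}
      let c' : ι' → LinearMap.ker f₀ := fun j => ⟨c j.1, LinearMap.mem_ker.mpr j.2⟩
      have hc' : ∀ j', c' j' ≠ 0 := by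
        intro j' h
        exact hc j'.1 ((Submodule.mk_eq_zero _ _).mp h)
      have hmin' : ∀ g' : Module.Dual F (LinearMap.ker f₀), g' ≠ 0 →
          (d + Fintype.card F - 1) / Fintype.card F ≤ mw c' g' := by
        intro g' hg'
        exact cd_le_of_le hq (residual_bound c hmin hf₀ g' hg')
      have hcdpos : 0 < (d + Fintype.card F - 1) / Fintype.card F := cd_pos hd hq
      have hsp' : Submodule.span F (Set.range c') = ⊤ := by
        by_contra hne
        obtain ⟨g', hg'ne, hvan⟩ := exists_dual_annihilator (F := F) hne
        have hmw0 : mw c' g' = 0 := by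
          have : IsEmpty {j' // g' (c' j') ≠ 0} :=
            ⟨fun x => x.2 (hvan _ (Submodule.subset_span ⟨x.1, rfl⟩))⟩
          rw [mw]
          exact Nat.card_of_isEmpty
        have := hmin' g' hg'ne
        rw [hmw0] at this
        omega
      -- length of the residual code
      have hsplit : Fintype.card ι' + mw c f₀ = Fintype.card ι := by
        rw [Fintype.card_subtype, mw_eq_card, ← Finset.card_univ]
        exact Finset.card_filter_add_card_filter_not _
      have hn' : Fintype.card ι' =
          gbound (Fintype.card F) k ((d + Fintype.card F - 1) / Fintype.card F) := by
        rw [gbound_succ_left k hd hq] at hn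
        omega
      -- exactness of the residual minimum distance
      have hWnt : Nontrivial (LinearMap.ker f₀) := by
        apply Module.nontrivial_of_finrank_pos (R := F)
        omega
      have hSne : {m | ∃ g' : Module.Dual F (LinearMap.ker f₀),
          g' ≠ 0 ∧ mw c' g' = m}.Nonempty := by
        obtain ⟨g, hg⟩ := exists_dual_ne_zero (F := F) hWnt
        exact ⟨mw c' g, g, hg, rfl⟩
      obtain ⟨g₁, hg₁ne, hg₁⟩ := Nat.sInf_mem hSne
      set d₁ := sInf {m | ∃ g' : Module.Dual F (LinearMap.ker f₀),
          g' ≠ 0 ∧ mw c' g' = m} with hd₁def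
      have hmin₁ : ∀ g' : Module.Dual F (LinearMap.ker f₀), g' ≠ 0 → d₁ ≤ mw c' g' :=
        fun g' hg' => Nat.sInf_le ⟨g', hg', rfl⟩
      have hd₁ge : (d + Fintype.card F - 1) / Fintype.card F ≤ d₁ :=
        le_trans (hmin' g₁ hg₁ne) (le_of_eq hg₁)
      have hA := lemA k (LinearMap.ker f₀) hWrank ι' c' hsp' d₁
        (lt_of_lt_of_le hcdpos hd₁ge) hmin₁
      have hd₁eq : d₁ = (d + Fintype.card F - 1) / Fintype.card F := by
        by_contra hne
        have hlt : (d + Fintype.card F - 1) / Fintype.card F < d₁ := by omega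
        have := gbound_strict_mono (q := Fintype.card F) hkpos hlt
        omega
      -- apply the induction hypothesis
      obtain ⟨v', hv'ne, hv'⟩ := ih (LinearMap.ker f₀) hWrank ι' c' hc' hsp'
        ((d + Fintype.card F - 1) / Fintype.card F) hn' hmin'
        ⟨g₁, hg₁ne, by rw [hg₁, hd₁eq]⟩
      refine ⟨(v' : V), fun h => hv'ne (Subtype.ext h), ?_⟩
      -- multiplicity transfer
      have hmult : multc F c (v' : V) = multc F c' v' := by
        rw [multc, multc]
        apply Nat.card_congr
        symm
        refine ((Equiv.subtypeEquivRight ?_).trans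
          ((Equiv.subtypeSubtypeEquivSubtypeInter (fun j => f₀ (c j) = 0)
            (fun j => ∃ lam : F, lam ≠ 0 ∧ c j = lam • (v' : V))).trans
          (Equiv.subtypeEquivRight ?_)))
        · intro j'
          constructor
          · rintro ⟨lam, hlam, hl⟩
            exact ⟨lam, hlam, by rw [show c j'.1 = (c' j' : V) from rfl, hl]; rfl⟩
          · rintro ⟨lam, hlam, hl⟩
            refine ⟨lam, hlam, ?_⟩
            apply Subtype.ext
            rw [show ((c' j' : V)) = c j'.1 from rfl, hl]
            rfl
        · intro j
          constructor
          · exact fun h => h.2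
          · rintro ⟨lam, hlam, hl⟩
            refine ⟨?_, lam, hlam, hl⟩
            rw [hl]
            have : f₀ (v' : V) = 0 := v'.2
            simp [this]
      rw [hmult, hv']
      rw [Nat.succ_sub_one]
      have hkk : k = (k - 1) + 1 := by omega
      rw [hkk, cd_comp hd hq (k-1), Nat.add_sub_cancel]
end main2

theorem stmt3 {F : Type*} [Field F] [Fintype F] {n k d : ℕ}
    (G : Matrix (Fin k) (Fin n) F)
    (hinj : Function.Injective fun a : Fin k → F => Matrix.vecMul a G)
    (hcol : ∀ j, (fun i => G i j) ≠ 0)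
    (hn : n = gbound (Fintype.card F) k d)
    (hmin : ∀ a : Fin k → F, a ≠ 0 → d ≤ wt (Matrix.vecMul a G))
    (hex : ∃ a : Fin k → F, a ≠ 0 ∧ wt (Matrix.vecMul a G) = d) :
    (∃ v : Fin k → F, v ≠ 0 ∧
      Nat.card {j : Fin n // ∃ lam : F, lam ≠ 0 ∧ (fun i => G i j) = lam • v} =
        (d + Fintype.card F ^ (k - 1) - 1) / Fintype.card F ^ (k - 1)) ∧
    ∀ v : Fin k → F, v ≠ 0 →
      Nat.card {j : Fin n // ∃ lam : F, lam ≠ 0 ∧ (fun i => G i j) = lam • v} ≤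
        (d + Fintype.card F ^ (k - 1) - 1) / Fintype.card F ^ (k - 1) := by
  classical
  set c : Fin n → (Fin k → F) := fun j i => G i j with hc
  -- from a functional to a row vector
  have hdual : ∀ f : Module.Dual F (Fin k → F), ∃ a : Fin k → F,
      (∀ j, Matrix.vecMul a G j = f (c j)) ∧ (a = 0 → f = 0) := by
    intro f
    refine ⟨fun i => f (fun j' => if i = j' then 1 else 0), fun j => ?_, fun ha => ?_⟩
    · rw [LinearMap.pi_apply_eq_sum_univ f (c j)]
      simp only [Matrix.vecMul, dotProduct, smul_eq_mul]
      exact Finset.sum_congr rfl fun i _ => by rw [mul_comm]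
    · apply LinearMap.ext
      intro x
      rw [LinearMap.pi_apply_eq_sum_univ f x]
      have h0 : ∀ i, f (fun j' => if i = j' then 1 else 0) = 0 := fun i => congrFun ha i
      simp [h0]
  -- from a row vector to a functional
  have hfa : ∀ a : Fin k → F, ∃ f : Module.Dual F (Fin k → F),
      (∀ j, Matrix.vecMul a G j = f (c j)) ∧ (f = 0 → a = 0) := by
    intro a
    refine ⟨∑ i, a i • (LinearMap.proj i : (Fin k → F) →ₗ[F] F), fun j => ?_, fun hf => ?_⟩
    · simp only [LinearMap.sum_apply, LinearMap.smul_apply, LinearMap.proj_apply,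
        smul_eq_mul, Matrix.vecMul, dotProduct]
      rfl
    · have hz : Matrix.vecMul a G = 0 := by
        funext j
        have h1 : Matrix.vecMul a G j = (∑ i, a i • (LinearMap.proj i : (Fin k → F) →ₗ[F] F)) (c j) := by
          simp only [LinearMap.sum_apply, LinearMap.smul_apply, LinearMap.proj_apply,
            smul_eq_mul, Matrix.vecMul, dotProduct]
          rfl
        rw [h1, hf]
        rfl
      apply hinj
      show Matrix.vecMul a G = Matrix.vecMul 0 G
      rw [hz, Matrix.zero_vecMul]
  have hcne : ∀ j, c j ≠ 0 := hcol
  -- spanning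
  have hspan : Submodule.span F (Set.range c) = ⊤ := by
    by_contra hne
    obtain ⟨f, hfne, hvan⟩ := exists_dual_annihilator (F := F) hne
    obtain ⟨a, hav, ha0⟩ := hdual f
    have hz : Matrix.vecMul a G = 0 := by
      funext j
      rw [hav j, hvan _ (Submodule.subset_span ⟨j, rfl⟩)]
      rfl
    exact hfne (ha0 (hinj (show Matrix.vecMul a G = Matrix.vecMul 0 G by
      rw [hz, Matrix.zero_vecMul])))
  -- weight transfer
  have hwt : ∀ (a : Fin k → F) (f : Module.Dual F (Fin k → F)),
      (∀ j, Matrix.vecMul a G j = f (c j)) → wt (Matrix.vecMul a G) = mw c f := by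
    intro a f h
    rw [wt, mw]
    exact Nat.card_congr (Equiv.subtypeEquivRight fun j => by rw [h j])
  -- min distance in dual form
  have hmin' : ∀ f : Module.Dual F (Fin k → F), f ≠ 0 → d ≤ mw c f := by
    intro f hf
    obtain ⟨a, hav, ha0⟩ := hdual f
    have ha : a ≠ 0 := fun h => hf (ha0 h)
    rw [← hwt a f hav]
    exact hmin a ha
  have hex' : ∃ f : Module.Dual F (Fin k → F), f ≠ 0 ∧ mw c f = d := by
    obtain ⟨a, ha, haw⟩ := hex
    obtain ⟨f, hav, hf0⟩ := hfa a
    exact ⟨f, fun h => ha (hf0 h), by rw [← hwt a f hav]; exact haw⟩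
  have hd : 0 < d := by
    rcases Nat.eq_zero_or_pos d with h0 | h
    · obtain ⟨f, hfne, hf⟩ := hex'
      exact absurd (dual_eq_zero_of_vanish hspan (vanish_of_mw_zero (by rw [hf, h0]))) hfne
    · exact h
  have hrank : finrank F (Fin k → F) = k := by simp [Module.finrank_pi]
  have hn' : Fintype.card (Fin n) = gbound (Fintype.card F) k d := by
    rw [Fintype.card_fin]; exact hn
  constructor
  · obtain ⟨v, hv, hm⟩ := lemB2 (F := F) k (Fin k → F) hrank (Fin n) c hcne hspan d
      hn' hmin' hex'
    exact ⟨v, hv, hm⟩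
  · intro v hv
    have := lemB1 (F := F) c hcne hspan d hd (by rw [hrank]; exact hn') hmin' v hv
    rw [hrank] at this
    exact this
end

section
/- Let C be a Griesmer [g_q(k,d),k,d] code over F_q, let a be a minimum weight codeword, and let P_a : C → Res(C,a) be the puncturing map at supp(a). If q divides d, then every preimage under P_a of a minimum weight codeword of Res(C,a) has weight exactly d in C. -/
open Finset in
private lemma wt_eq_card {ι F : Type*} [Fintype ι] [Zero F] [DecidableEq F] (c : ι → F) :
    wt c = (Finset.univ.filter (fun i => c i ≠ 0)).card := by
  classical
  rw [wt, Nat.card_eq_fintype_card, Fintype.card_subtype]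

open Finset in
private lemma wt_res_eq_card {n : ℕ} {F : Type*} [Zero F] [DecidableEq F] (a b : Fin n → F) :
    wt (fun i : {i : Fin n // a i = 0} => b i)
      = (Finset.univ.filter (fun i : Fin n => a i = 0 ∧ b i ≠ 0)).card := by
  classical
  rw [wt,
    Nat.card_congr (Equiv.subtypeSubtypeEquivSubtypeInter (fun i : Fin n => a i = 0)
      (fun i => b i ≠ 0)),
    Nat.card_eq_fintype_card, Fintype.card_subtype]

theorem stmt8 {F : Type*} [Field F] [Fintype F] {n k d : ℕ}
    (C : Submodule F (Fin n → F))
    (hk : Module.finrank F C = k)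
    (hn : n = gbound (Fintype.card F) k d)
    (hmin : ∀ c ∈ C, c ≠ 0 → d ≤ wt c)
    (hex : ∃ c ∈ C, c ≠ 0 ∧ wt c = d)
    (a : Fin n → F) (haC : a ∈ C) (haw : wt a = d)
    (hqd : Fintype.card F ∣ d) :
    ∀ b ∈ C,
      wt (fun i : {i : Fin n // a i = 0} => b i)
          = (d + Fintype.card F - 1) / Fintype.card F →
      wt b = d := by
  classical
  intro b hb hbw
  set q := Fintype.card F with hqdef
  have hq2 : 2 ≤ q := Fintype.one_lt_card
  rw [wt_res_eq_card] at hbw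
  rcases Nat.eq_zero_or_pos d with hd0 | hdpos
  · -- degenerate case d = 0
    subst hd0
    have ha0 : ∀ i, a i = 0 := by
      intro i
      by_contra hai
      have : (Finset.univ.filter (fun i => a i ≠ 0)).card ≠ 0 := by
        apply Finset.card_ne_zero_of_mem (a := i)
        simp [hai]
      rw [← wt_eq_card] at this
      exact this haw
    have hzero : (0 + q - 1) / q = 0 := Nat.div_eq_of_lt (by omega)
    rw [hzero, Finset.card_eq_zero, Finset.filter_eq_empty_iff] at hbw
    have hb0 : ∀ i, b i = 0 := by
      intro i
      have := hbw (Finset.mem_univ i)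
      simp only [ha0 i, true_and, not_not] at this
      exact this
    rw [wt_eq_card]
    simp [hb0]
  · -- main case d > 0
    obtain ⟨e, rfl⟩ := hqd
    have he : 0 < e := by
      rcases Nat.eq_zero_or_pos e with h | h
      · rw [h, mul_zero] at hdpos; omega
      · exact h
    have hm : (q * e + q - 1) / q = e := by
      have h1 : q * e + q - 1 = q * e + (q - 1) := by omega
      rw [h1, Nat.mul_add_div (by omega), Nat.div_eq_of_lt (by omega)]
      omega
    rw [hm] at hbw
    -- the family of codewords b + l • a
    set W : F → ℕ := fun l => (Finset.univ.filter (fun i => b i + l * a i ≠ 0)).card with hW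
    have haS : (Finset.univ.filter (fun i => a i ≠ 0)).card = q * e := by
      rw [← wt_eq_card]; exact haw
    -- total count
    have hsum : ∑ l : F, W l = q * (q * e) := by
      have : ∀ l : F, W l = ∑ i : Fin n, (if b i + l * a i ≠ 0 then 1 else 0) := by
        intro l
        rw [hW]
        simp [Finset.card_filter]
      rw [Finset.sum_congr rfl (fun l _ => this l), Finset.sum_comm]
      have hcell : ∀ i : Fin n,
          (∑ l : F, (if b i + l * a i ≠ 0 then 1 else 0))
            = if a i ≠ 0 then q - 1 else (if b i ≠ 0 then q else 0) := by
        intro i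
        by_cases hai : a i ≠ 0
        · rw [if_pos hai]
          have h1 : (Finset.univ.filter (fun l : F => ¬ (b i + l * a i ≠ 0)))
              = {-(b i) / (a i)} := by
            ext l
            simp only [Finset.mem_filter, Finset.mem_univ, true_and, not_not,
              Finset.mem_singleton]
            rw [eq_div_iff hai]
            constructor
            · intro h; linear_combination h
            · intro h; linear_combination h
          have h2 : (Finset.univ.filter (fun l : F => b i + l * a i ≠ 0)).card
              = q - 1 := by
            have := Finset.card_filter_add_card_filter_not
              (s := (Finset.univ : Finset F)) (p := fun l : F => b i + l * a i ≠ 0)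
            rw [h1, Finset.card_singleton, Finset.card_univ] at this
            omega
          rw [← h2]
          simp [Finset.card_filter]
        · push_neg at hai
          simp only [hai, mul_zero, add_zero, ne_eq, not_true_eq_false, if_false]
          by_cases hbi : b i ≠ 0
          · simp [hbi, Finset.card_univ, hqdef]
          · push_neg at hbi; simp [hbi]
      rw [Finset.sum_congr rfl (fun i _ => hcell i)]
      rw [Finset.sum_ite, Finset.sum_const, Finset.sum_ite, Finset.sum_const,
        Finset.sum_const]
      have hT : ((Finset.univ.filter (fun i : Fin n => ¬ a i ≠ 0)).filter
          (fun i => b i ≠ 0)).card = e := by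
        rw [Finset.filter_filter, ← hbw]
        apply congrArg
        apply Finset.filter_congr
        intro i _
        simp only [not_not]
      rw [haS, hT]
      simp only [smul_eq_mul, mul_zero, add_zero]
      have h2 : q = (q - 1) + 1 := by omega
      calc q * e * (q - 1) + e * q = (q * e) * ((q - 1) + 1) := by ring
        _ = (q * e) * q := by rw [← h2]
        _ = q * (q * e) := by ring
    -- each W l is at least q * e
    have hlow : ∀ l : F, q * e ≤ W l := by
      intro l
      have hmem : (fun i => b i + l * a i) ∈ C := by
        have : (fun i => b i + l * a i) = b + l • a := by
          funext i; simp [mul_comm]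
        rw [this]
        exact C.add_mem hb (C.smul_mem l haC)
      have hne : (fun i => b i + l * a i) ≠ 0 := by
        have : (Finset.univ.filter (fun i : Fin n => a i = 0 ∧ b i ≠ 0)).Nonempty := by
          rw [← Finset.card_pos, hbw]; exact he
        obtain ⟨i, hi⟩ := this
        simp only [Finset.mem_filter] at hi
        intro h
        have := congrFun h i
        simp only [Pi.zero_apply, hi.2.1, mul_zero, add_zero] at this
        exact hi.2.2 this
      have := hmin _ hmem hne
      rwa [wt_eq_card] at this
    -- W 0 = wt b
    have hW0 : W 0 = wt b := by
      rw [hW, wt_eq_card]; simp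
    -- conclusion
    have hsplit : W 0 + ∑ l ∈ Finset.univ.erase (0 : F), W l = q * (q * e) := by
      rw [Finset.add_sum_erase _ W (Finset.mem_univ 0)]; exact hsum
    have hrest : (q - 1) * (q * e) ≤ ∑ l ∈ Finset.univ.erase (0 : F), W l := by
      have hcard : (Finset.univ.erase (0 : F)).card = q - 1 := by
        rw [Finset.card_erase_of_mem (Finset.mem_univ 0), Finset.card_univ]
      calc (q - 1) * (q * e) = (Finset.univ.erase (0 : F)).card • (q * e) := by
            rw [hcard, smul_eq_mul]
        _ ≤ ∑ l ∈ Finset.univ.erase (0 : F), W l :=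
            Finset.card_nsmul_le_sum _ _ _ (fun l _ => hlow l)
    have hle : W 0 ≤ q * e := by
      have h2 : q = (q - 1) + 1 := by omega
      have h1 : q * (q * e) = q * e + (q - 1) * (q * e) := by
        calc q * (q * e) = ((q - 1) + 1) * (q * e) := by rw [← h2]
          _ = q * e + (q - 1) * (q * e) := by ring
      omega
    have hge := hlow 0
    omega
end
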